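/- Let I ⊆ ℝ be an interval and let T₀, T₁, T₂, T₃ : I → M_N(ℂ) be differentiable matrix-valued functions satisfying the Nahm equation dT_i/ds + [T₀, T_i] = (1/2) Σ_{j,k} ε_{ijk} [T_j, T_k] for i = 1, 2, 3. Then for every ζ ∈ ℂ, the functions T(ζ) = (1/2)(T₁ + i T₂) + ζ T₃ − (1/2)(T₁ − i T₂) ζ² and T₊(ζ) = T₀ − i T₃ + i (T₁ − i T₂) ζ satisfy the Lax equation d(T(ζ))/ds + [T₊(ζ), T(ζ)] = 0 on I. -/
import Mathlib


attribute [local instance] Matrix.normedAddCommGroup Matrix.normedSpace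

/-- The Levi-Civita symbol `ε_{ijk}` on indices in `Fin 3` (with `ε₀₁₂ = 1`). -/
def eps (i j k : Fin 3) : ℤ :=
  (((j : ℕ) : ℤ) - ((i : ℕ) : ℤ)) * (((k : ℕ) : ℤ) - ((i : ℕ) : ℤ))
    * (((k : ℕ) : ℤ) - ((j : ℕ) : ℤ)) / 2

/-- `T(ζ) = (1/2)(T₁ + i T₂) + ζ T₃ − (1/2)(T₁ − i T₂) ζ²`
(spatial Nahm matrices indexed by `Fin 3`, so `T 0 = T₁` etc.). -/
noncomputable def Tz {N : ℕ} (T : Fin 3 → ℝ → Matrix (Fin N) (Fin N) ℂ) (ζ : ℂ) (s : ℝ) :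
    Matrix (Fin N) (Fin N) ℂ :=
  (1 / 2 : ℂ) • (T 0 s + Complex.I • T 1 s) + ζ • T 2 s
    - ((1 / 2 : ℂ) * ζ ^ 2) • (T 0 s - Complex.I • T 1 s)

/-- `T₊(ζ) = T₀ − i T₃ + i (T₁ − i T₂) ζ`. -/
noncomputable def Tplus {N : ℕ} (T₀ : ℝ → Matrix (Fin N) (Fin N) ℂ)
    (T : Fin 3 → ℝ → Matrix (Fin N) (Fin N) ℂ) (ζ : ℂ) (s : ℝ) :
    Matrix (Fin N) (Fin N) ℂ :=
  T₀ s - Complex.I • T 2 s + (Complex.I * ζ) • (T 0 s - Complex.I • T 1 s)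

/-- If `T₀, T₁, T₂, T₃ : I → M_N(ℂ)` satisfy the Nahm equation
`dT_i/ds + [T₀, T_i] = (1/2) Σ_{j,k} ε_{ijk} [T_j, T_k]` on an interval `I`, then for every
`ζ ∈ ℂ` the Lax equation `d(T(ζ))/ds + [T₊(ζ), T(ζ)] = 0` holds on `I`. -/
theorem nahm_implies_lax {N : ℕ} (I : Set ℝ) (hI : Convex ℝ I)
    (T₀ : ℝ → Matrix (Fin N) (Fin N) ℂ)
    (T T' : Fin 3 → ℝ → Matrix (Fin N) (Fin N) ℂ)
    (hT₀ : ∀ s ∈ I, DifferentiableWithinAt ℝ T₀ I s)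
    (hT : ∀ (i : Fin 3), ∀ s ∈ I, HasDerivWithinAt (T i) (T' i s) I s)
    (hnahm : ∀ (i : Fin 3), ∀ s ∈ I,
      T' i s + (T₀ s * T i s - T i s * T₀ s) =
        (1 / 2 : ℂ) • ∑ j : Fin 3, ∑ k : Fin 3,
          (eps i j k : ℂ) • (T j s * T k s - T k s * T j s)) :
    ∀ (ζ : ℂ), ∀ s ∈ I,
      HasDerivWithinAt (fun u => Tz T ζ u)
        (-(Tplus T₀ T ζ s * Tz T ζ s - Tz T ζ s * Tplus T₀ T ζ s)) I s := by

  intro ζ s hs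
  have h0 := hnahm 0 s hs
  have h1 := hnahm 1 s hs
  have h2 := hnahm 2 s hs
  simp only [eps, Fin.sum_univ_three, Fin.val_zero, Fin.val_one, Fin.val_two] at h0 h1 h2
  norm_num at h0 h1 h2
  have hd : HasDerivWithinAt (fun u => Tz T ζ u)
      ((1 / 2 : ℂ) • (T' 0 s + Complex.I • T' 1 s) + ζ • T' 2 s
        - ((1 / 2 : ℂ) * ζ ^ 2) • (T' 0 s - Complex.I • T' 1 s)) I s := by
    exact ((((hT 0 s hs).add ((hT 1 s hs).const_smul Complex.I)).const_smul
      ((1 / 2 : ℂ))).add ((hT 2 s hs).const_smul ζ)).sub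
      (((hT 0 s hs).sub ((hT 1 s hs).const_smul Complex.I)).const_smul ((1 / 2 : ℂ) * ζ ^ 2))
  convert hd using 1
  have e0 : T' 0 s = (T 1 s * T 2 s - T 2 s * T 1 s) - (T₀ s * T 0 s - T 0 s * T₀ s) := by rw [eq_sub_iff_add_eq, h0]; module
  have e1 : T' 1 s = (T 2 s * T 0 s - T 0 s * T 2 s) - (T₀ s * T 1 s - T 1 s * T₀ s) := by rw [eq_sub_iff_add_eq, h1]; module
  have e2 : T' 2 s = (T 0 s * T 1 s - T 1 s * T 0 s) - (T₀ s * T 2 s - T 2 s * T₀ s) := by rw [eq_sub_iff_add_eq, h2]; module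
  rw [e0, e1, e2]
  simp only [Tz, Tplus, smul_add, smul_sub, sub_mul, mul_sub, add_mul, mul_add,
    smul_mul_assoc, mul_smul_comm, smul_smul, neg_sub]
  match_scalars <;>
    simp only [Complex.ext_iff, Complex.add_re, Complex.add_im, Complex.mul_re,
        Complex.mul_im, Complex.sub_re, Complex.sub_im, Complex.neg_re, Complex.neg_im,
        Complex.I_re, Complex.I_im, Complex.re_ofNat, Complex.im_ofNat, Complex.one_re,
        Complex.one_im, Complex.div_re, Complex.div_im, Complex.normSq_ofNat,
        Complex.zero_re, Complex.zero_im, pow_two] <;>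
    constructor <;> ring
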